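/- The subgroup H̃(3) is contained in H(3), it is a normal subgroup of H(3), and the index of H̃(3) in H(3) divides 4. -/

import Mathlib

noncomputable section

open Matrix Complex

/-- GL(3,ℂ): the group of invertible 3×3 complex matrices. -/
abbrev GL3 : Type := (Matrix (Fin 3) (Fin 3) ℂ)ˣ

/-- PGL(3,ℂ): the quotient of GL(3,ℂ) by its center. -/
abbrev PGL3 : Type := GL3 ⧸ Subgroup.center GL3

/-- The projection GL(3,ℂ) → PGL(3,ℂ). -/
def pgl : GL3 →* PGL3 := QuotientGroup.mk' (Subgroup.center GL3)

/-- The class [M] ∈ PGL(3,ℂ) of an (invertible) matrix M. -/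
noncomputable def cls (M : Matrix (Fin 3) (Fin 3) ℂ) : PGL3 := by
  classical exact if h : IsUnit M then pgl h.unit else 1

/-- The Hermitian matrix of signature (2,1) defining the Siegel model. -/
def Hform : Matrix (Fin 3) (Fin 3) ℂ := !![0,0,1; 0,1,0; 1,0,0]

lemma Hform_mul_Hform : Hform * Hform = 1 := by
  rw [Hform, Matrix.mul_fin_three, Matrix.one_fin_three]
  norm_num

/-- U(2,1,O): the subgroup of GL(3,ℂ) of matrices with entries in O
satisfying Mᴴ H M = H, for O a subring of ℂ closed under conjugation. -/
def U21 (O : Subring ℂ) (hO : ∀ z ∈ O, (starRingEnd ℂ) z ∈ O) : Subgroup GL3 where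
  carrier := {M : GL3 | (∀ i j, (M : Matrix (Fin 3) (Fin 3) ℂ) i j ∈ O) ∧
      (M : Matrix (Fin 3) (Fin 3) ℂ)ᴴ * Hform * (M : Matrix (Fin 3) (Fin 3) ℂ) = Hform}
  one_mem' := by
    constructor
    · intro i j
      by_cases h : i = j <;> simp [Matrix.one_apply, h, Subring.one_mem, Subring.zero_mem]
    · simp
  mul_mem' := by
    rintro a b ⟨ha1, ha2⟩ ⟨hb1, hb2⟩
    constructor
    · intro i j
      rw [Units.val_mul, Matrix.mul_apply]
      exact Subring.sum_mem _ fun k _ => Subring.mul_mem _ (ha1 i k) (hb1 k j)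
    · rw [Units.val_mul, Matrix.conjTranspose_mul]
      calc (↑b)ᴴ * (↑a)ᴴ * Hform * ((↑a : Matrix (Fin 3) (Fin 3) ℂ) * ↑b)
          = (↑b)ᴴ * ((↑a)ᴴ * Hform * ↑a) * ↑b := by simp only [mul_assoc]
        _ = (↑b)ᴴ * Hform * ↑b := by rw [ha2]
        _ = Hform := hb2
  inv_mem' := by
    rintro a ⟨ha1, ha2⟩
    have hBA : (Hform * (a.val)ᴴ * Hform) * a.val = 1 := by
      calc (Hform * (a.val)ᴴ * Hform) * a.val
          = Hform * ((a.val)ᴴ * Hform * a.val) := by simp only [mul_assoc]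
        _ = Hform * Hform := by rw [ha2]
        _ = 1 := Hform_mul_Hform
    have hInv : (a⁻¹).val = Hform * (a.val)ᴴ * Hform :=
      Units.inv_eq_of_mul_eq_one_left hBA
    have hab : a.val * (a⁻¹).val = 1 := a.mul_inv
    constructor
    · intro i j
      rw [hInv]
      simp only [Matrix.mul_apply, Fin.sum_univ_three]
      fin_cases i <;> fin_cases j <;>
        simp [Hform, Matrix.conjTranspose_apply, Matrix.vecHead, Matrix.vecTail, Function.comp] <;>
        exact hO _ (ha1 _ _)
    · calc ((a⁻¹).val)ᴴ * Hform * (a⁻¹).val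
          = ((a⁻¹).val)ᴴ * ((a.val)ᴴ * Hform * a.val) * (a⁻¹).val := by rw [ha2]
        _ = (a.val * (a⁻¹).val)ᴴ * Hform * (a.val * (a⁻¹).val) := by
            rw [Matrix.conjTranspose_mul]; simp only [mul_assoc]
        _ = Hform := by rw [hab]; simp

/-- PU(2,1,O): the image of U(2,1,O) in PGL(3,ℂ). -/
def PU21 (O : Subring ℂ) (hO : ∀ z ∈ O, (starRingEnd ℂ) z ∈ O) : Subgroup PGL3 :=
  (U21 O hO).map pgl

lemma conjClosed (s : Set ℂ) (h : ∀ z ∈ s, (starRingEnd ℂ) z ∈ Subring.closure s) :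
    ∀ z ∈ Subring.closure s, (starRingEnd ℂ) z ∈ Subring.closure s := by
  intro z hz
  have hle : Subring.closure s ≤ (Subring.closure s).comap (starRingEnd ℂ) :=
    Subring.closure_le.mpr fun x hx => Subring.mem_comap.mpr (h x hx)
  exact Subring.mem_comap.mp (hle hz)


-- test ring pieces
section rings
open Matrix Complex

/-- ω = (−1+i√3)/2, a primitive cube root of unity. -/
def omega3 : ℂ := (-1 + Complex.I * (Real.sqrt 3 : ℝ)) / 2

/-- O₃ = ℤ[ω], the Eisenstein integers. -/
def O3 : Subring ℂ := Subring.closure {omega3}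

lemma conj_omega3 : (starRingEnd ℂ) omega3 = -1 - omega3 := by
  rw [omega3]
  rw [map_div₀, map_add, _root_.map_mul, Complex.conj_I, Complex.conj_ofReal]
  rw [map_neg, _root_.map_one, _root_.map_ofNat]
  ring

lemma hO3 : ∀ z ∈ O3, (starRingEnd ℂ) z ∈ O3 := by
  apply conjClosed
  intro z hz
  rw [Set.mem_singleton_iff] at hz
  subst hz
  rw [conj_omega3]
  exact sub_mem (neg_mem (Subring.one_mem _)) (Subring.subset_closure rfl)

/-- O₁ = ℤ[i], the Gaussian integers. -/
def O1 : Subring ℂ := Subring.closure {Complex.I}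

lemma hO1 : ∀ z ∈ O1, (starRingEnd ℂ) z ∈ O1 := by
  apply conjClosed
  intro z hz
  rw [Set.mem_singleton_iff] at hz
  subst hz
  rw [Complex.conj_I]
  exact neg_mem (Subring.subset_closure rfl)

/-- τ = (1+i√7)/2. -/
def tau7 : ℂ := (1 + Complex.I * (Real.sqrt 7 : ℝ)) / 2

/-- O₇ = ℤ[(1+i√7)/2], the ring of integers of ℚ(i√7). -/
def O7 : Subring ℂ := Subring.closure {tau7}

lemma conj_tau7 : (starRingEnd ℂ) tau7 = 1 - tau7 := by
  rw [tau7]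
  rw [map_div₀, map_add, _root_.map_mul, Complex.conj_I, Complex.conj_ofReal]
  rw [_root_.map_one, _root_.map_ofNat]
  ring

lemma hO7 : ∀ z ∈ O7, (starRingEnd ℂ) z ∈ O7 := by
  apply conjClosed
  intro z hz
  rw [Set.mem_singleton_iff] at hz
  subst hz
  rw [conj_tau7]
  exact sub_mem (Subring.one_mem _) (Subring.subset_closure rfl)

end rings

section matrices
open Matrix Complex

/-- The Cayley transform J. -/
def Jmat : Matrix (Fin 3) (Fin 3) ℂ := !![1,1,0; 0,1,-1; 1,1,-1]

-- d = 3 ------------------------------------------------------------------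
def E1d3 : Matrix (Fin 3) (Fin 3) ℂ :=
  !![omega3^2, omega3^2 - 1, omega3 + 2;
     Complex.I * (Real.sqrt 3 : ℝ), 1 + Complex.I * (Real.sqrt 3 : ℝ), omega3^2 - 1;
     Complex.I * (Real.sqrt 3 : ℝ), Complex.I * (Real.sqrt 3 : ℝ), omega3^2]

def U1d3 : Matrix (Fin 3) (Fin 3) ℂ :=
  !![1, 0, Complex.I * (Real.sqrt 3 : ℝ); 0, 1, 0; 0, 0, 1]

def U2d3 : Matrix (Fin 3) (Fin 3) ℂ :=
  !![1, 0, 0; 0, 1, 0; Complex.I * (Real.sqrt 3 : ℝ), 0, 1]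

def I1d3 : Matrix (Fin 3) (Fin 3) ℂ := Jmat⁻¹ * !![-1,0,0; 0,1,0; 0,0,-1] * Jmat

def I2d3 : Matrix (Fin 3) (Fin 3) ℂ := Jmat⁻¹ * !![1,0,0; 0,-1,0; 0,0,-1] * Jmat

/-- The Falbel–Parker generators of PU(2,1,O₃). -/
def Pd3 : Matrix (Fin 3) (Fin 3) ℂ := !![1, 1, omega3; 0, omega3, -omega3; 0, 0, 1]

def Qd3 : Matrix (Fin 3) (Fin 3) ℂ := !![1, 1, omega3; 0, -1, 1; 0, 0, 1]

def Rd3 : Matrix (Fin 3) (Fin 3) ℂ := !![0, 0, 1; 0, -1, 0; 1, 0, 0]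

/-- The hybrid H(3). -/
def H3 : Subgroup PGL3 :=
  Subgroup.closure {cls E1d3, cls U1d3, cls U2d3, cls I1d3, cls I2d3}

/-- The hybrid H̃(3). -/
def Ht3 : Subgroup PGL3 := Subgroup.closure {cls E1d3, cls U1d3, cls U2d3}

/-- The hybrid H'(3). -/
def H'3 : Subgroup PGL3 :=
  Subgroup.closure {cls (Pd3^2 * (Rd3 * Qd3^2) * (Pd3^2)⁻¹), cls (Qd3^2), cls (Rd3 * Qd3^2 * Rd3)}

/-- The Eisenstein–Picard modular group Γ(3) = PU(2,1,O₃). -/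
def Gamma3 : Subgroup PGL3 := PU21 O3 hO3

-- d = 1 ------------------------------------------------------------------
def E1d1 : Matrix (Fin 3) (Fin 3) ℂ :=
  !![Complex.I, -1 + Complex.I, 1 - Complex.I;
     -2 * Complex.I, 1 - 2 * Complex.I, -1 + Complex.I;
     -2 * Complex.I, -2 * Complex.I, Complex.I]

def U1d1 : Matrix (Fin 3) (Fin 3) ℂ := !![1, 0, Complex.I; 0, 1, 0; 0, 0, 1]

def E2d1 : Matrix (Fin 3) (Fin 3) ℂ :=
  !![Complex.I, 2 * Complex.I, -2 * Complex.I;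
     1 - Complex.I, 1 - 2 * Complex.I, 2 * Complex.I;
     1 - Complex.I, 1 - Complex.I, Complex.I]

def U2d1 : Matrix (Fin 3) (Fin 3) ℂ := !![1, 0, 0; 0, 1, 0; Complex.I, 0, 1]

/-- The Falbel–Francsics–Parker generators of PU(2,1,O₁). -/
def I0d1 : Matrix (Fin 3) (Fin 3) ℂ := !![0, 0, 1; 0, -1, 0; 1, 0, 0]

def Qd1 : Matrix (Fin 3) (Fin 3) ℂ :=
  !![1, 1 - Complex.I, -1; 0, -1, 1 + Complex.I; 0, 0, 1]

def Td1 : Matrix (Fin 3) (Fin 3) ℂ := !![1, 0, Complex.I; 0, 1, 0; 0, 0, 1]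

def R1d1 : Matrix (Fin 3) (Fin 3) ℂ := Jmat⁻¹ * !![Complex.I,0,0; 0,1,0; 0,0,1] * Jmat

def R2d1 : Matrix (Fin 3) (Fin 3) ℂ := Jmat⁻¹ * !![1,0,0; 0,Complex.I,0; 0,0,1] * Jmat

/-- The hybrid H(1). -/
def H1 : Subgroup PGL3 := Subgroup.closure {cls E1d1, cls U1d1, cls E2d1, cls U2d1}

/-- The hybrid H'(1). -/
def H'1 : Subgroup PGL3 := Subgroup.closure {cls R1d1, cls R2d1, cls U1d1, cls U2d1}

/-- The Gauss–Picard modular group Γ(1) = PU(2,1,O₁). -/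
def Gamma1 : Subgroup PGL3 := PU21 O1 hO1

-- d = 7 ------------------------------------------------------------------
def U1d7 : Matrix (Fin 3) (Fin 3) ℂ :=
  !![1, 0, Complex.I * (Real.sqrt 7 : ℝ); 0, 1, 0; 0, 0, 1]

def U2d7 : Matrix (Fin 3) (Fin 3) ℂ :=
  !![1, 0, 0; 0, 1, 0; Complex.I * (Real.sqrt 7 : ℝ), 0, 1]

def A1d7 : Matrix (Fin 3) (Fin 3) ℂ :=
  !![-(1/2) + Complex.I * (Real.sqrt 7 : ℝ) / 2, -(3/2) + Complex.I * (Real.sqrt 7 : ℝ) / 2,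
       1/2 - Complex.I * (Real.sqrt 7 : ℝ) / 2;
     1, 2, -(3/2) + Complex.I * (Real.sqrt 7 : ℝ) / 2;
     1, 1, -(1/2) + Complex.I * (Real.sqrt 7 : ℝ) / 2]

def B1d7 : Matrix (Fin 3) (Fin 3) ℂ := !![1, 0, 0; -2, -1, 0; -2, -2, 1]

def A2d7 : Matrix (Fin 3) (Fin 3) ℂ :=
  !![-(1/2) + Complex.I * (Real.sqrt 7 : ℝ) / 2, -1, 1;
     3/2 - Complex.I * (Real.sqrt 7 : ℝ) / 2, 2, -1;
     1/2 - Complex.I * (Real.sqrt 7 : ℝ) / 2, 3/2 - Complex.I * (Real.sqrt 7 : ℝ) / 2,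
       -(1/2) + Complex.I * (Real.sqrt 7 : ℝ) / 2]

def B2d7 : Matrix (Fin 3) (Fin 3) ℂ := !![1, 2, -2; 0, -1, 2; 0, 0, 1]

/-- The Mark–Paupert generators of PU(2,1,O₇). -/
def T1d7 : Matrix (Fin 3) (Fin 3) ℂ :=
  !![1, -1, -(1/2) + Complex.I * (Real.sqrt 7 : ℝ) / 2; 0, 1, 1; 0, 0, 1]

def Rd7 : Matrix (Fin 3) (Fin 3) ℂ := !![1, 0, 0; 0, -1, 0; 0, 0, 1]

def Id7 : Matrix (Fin 3) (Fin 3) ℂ := !![0, 0, 1; 0, -1, 0; 1, 0, 0]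

/-- The hybrid H(7). -/
def H7 : Subgroup PGL3 :=
  Subgroup.closure {cls U1d7, cls U2d7, cls A1d7, cls A2d7, cls B1d7, cls B2d7}

/-- The Picard modular group Γ(7) = PU(2,1,O₇). -/
def Gamma7 : Subgroup PGL3 := PU21 O7 hO7

end matrices

section presented
/-- The relators c², a⁶, aca⁻¹c⁻¹, (ab)³, (cab)³, b² in the free group on a,b,c
(a = of 0, b = of 1, c = of 2). -/
def relsG : Set (FreeGroup (Fin 3)) :=
  {(FreeGroup.of 2)^2, (FreeGroup.of 0)^6,
   FreeGroup.of 0 * FreeGroup.of 2 * (FreeGroup.of 0)⁻¹ * (FreeGroup.of 2)⁻¹,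
   (FreeGroup.of 0 * FreeGroup.of 1)^3,
   (FreeGroup.of 2 * FreeGroup.of 0 * FreeGroup.of 1)^3,
   (FreeGroup.of 1)^2}

/-- The presented group G = ⟨a,b,c | c², a⁶, [a,c], (ab)³, (cab)³, b²⟩. -/
abbrev Gpres := PresentedGroup relsG
end presented


section stmt1aux
open Matrix Complex

/-! ### Auxiliary matrices -/

def mJi : Matrix (Fin 3) (Fin 3) ℂ := !![0,-1,1; 1,1,-1; 1,0,-1]
def mI1 : Matrix (Fin 3) (Fin 3) ℂ := !![-1,-2,2; 0,1,-2; 0,0,-1]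
def mI2 : Matrix (Fin 3) (Fin 3) ℂ := !![-1,0,0; 2,1,0; 2,2,-1]
def mE1i : Matrix (Fin 3) (Fin 3) ℂ :=
  !![omega3, omega3 - 1, omega3^2 + 2;
     -(2*omega3+1), 1 - (2*omega3+1), omega3 - 1;
     -(2*omega3+1), -(2*omega3+1), omega3]
def mU1i : Matrix (Fin 3) (Fin 3) ℂ :=
  !![1, 0, -(Complex.I * (Real.sqrt 3 : ℝ)); 0, 1, 0; 0, 0, 1]
def mU2i : Matrix (Fin 3) (Fin 3) ℂ :=
  !![1, 0, 0; 0, 1, 0; -(Complex.I * (Real.sqrt 3 : ℝ)), 0, 1]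
def mW : Matrix (Fin 3) (Fin 3) ℂ := !![omega3,0,0; 0,omega3,0; 0,0,omega3]
def mWi : Matrix (Fin 3) (Fin 3) ℂ := !![omega3^2,0,0; 0,omega3^2,0; 0,0,omega3^2]

lemma hs3 : (Complex.I * (Real.sqrt 3 : ℝ) : ℂ) = 2 * omega3 + 1 := by rw [omega3]; ring

lemma homega : omega3 ^ 2 + omega3 + 1 = 0 := by
  have h : ((Real.sqrt 3 : ℝ) : ℂ)^2 = 3 := by
    rw [← Complex.ofReal_pow, Real.sq_sqrt (by norm_num : (0:ℝ) ≤ 3)]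
    norm_num
  rw [omega3]
  linear_combination (Complex.I^2/4) * h + (3/4) * Complex.I_sq

lemma LJ : Jmat * mJi = 1 := by
  simp only [Jmat, mJi, mI1, mI2, E1d3, mE1i, U1d3, mU1i, U2d3, mU2i, mW, mWi, hs3]
  simp only [Matrix.mul_fin_three, Matrix.one_fin_three]
  simp only [Matrix.vecCons, Fin.cons_inj, Equiv.apply_eq_iff_eq]
  refine ⟨⟨?_,?_,?_,trivial⟩,⟨?_,?_,?_,trivial⟩,⟨?_,?_,?_,trivial⟩,trivial⟩
  · ring
  · ring
  · ring
  · ring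
  · ring
  · ring
  · ring
  · ring
  · ring

lemma LE1 : E1d3 * mE1i = 1 := by
  simp only [Jmat, mJi, mI1, mI2, E1d3, mE1i, U1d3, mU1i, U2d3, mU2i, mW, mWi, hs3]
  simp only [Matrix.mul_fin_three, Matrix.one_fin_three]
  simp only [Matrix.vecCons, Fin.cons_inj, Equiv.apply_eq_iff_eq]
  refine ⟨⟨?_,?_,?_,trivial⟩,⟨?_,?_,?_,trivial⟩,⟨?_,?_,?_,trivial⟩,trivial⟩
  · linear_combination ((-2) + (-1)*omega3) * homega
  · linear_combination ((-2) + (-1)*omega3) * homega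
  · linear_combination ((1) + (1)*omega3^2) * homega
  · linear_combination ((-1) + (-2)*omega3) * homega
  · linear_combination ((-1) + (-2)*omega3) * homega
  · linear_combination ((3)*omega3) * homega
  · linear_combination ((-1) + (-2)*omega3) * homega
  · linear_combination ((-1) + (-2)*omega3) * homega
  · linear_combination ((3)*omega3) * homega

lemma LU1 : U1d3 * mU1i = 1 := by
  simp only [Jmat, mJi, mI1, mI2, E1d3, mE1i, U1d3, mU1i, U2d3, mU2i, mW, mWi, hs3]
  simp only [Matrix.mul_fin_three, Matrix.one_fin_three]
  simp only [Matrix.vecCons, Fin.cons_inj, Equiv.apply_eq_iff_eq]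
  refine ⟨⟨?_,?_,?_,trivial⟩,⟨?_,?_,?_,trivial⟩,⟨?_,?_,?_,trivial⟩,trivial⟩
  · ring
  · ring
  · ring
  · ring
  · ring
  · ring
  · ring
  · ring
  · ring

lemma LU2 : U2d3 * mU2i = 1 := by
  simp only [Jmat, mJi, mI1, mI2, E1d3, mE1i, U1d3, mU1i, U2d3, mU2i, mW, mWi, hs3]
  simp only [Matrix.mul_fin_three, Matrix.one_fin_three]
  simp only [Matrix.vecCons, Fin.cons_inj, Equiv.apply_eq_iff_eq]
  refine ⟨⟨?_,?_,?_,trivial⟩,⟨?_,?_,?_,trivial⟩,⟨?_,?_,?_,trivial⟩,trivial⟩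
  · ring
  · ring
  · ring
  · ring
  · ring
  · ring
  · ring
  · ring
  · ring

lemma LW : mW * mWi = 1 := by
  simp only [Jmat, mJi, mI1, mI2, E1d3, mE1i, U1d3, mU1i, U2d3, mU2i, mW, mWi, hs3]
  simp only [Matrix.mul_fin_three, Matrix.one_fin_three]
  simp only [Matrix.vecCons, Fin.cons_inj, Equiv.apply_eq_iff_eq]
  refine ⟨⟨?_,?_,?_,trivial⟩,⟨?_,?_,?_,trivial⟩,⟨?_,?_,?_,trivial⟩,trivial⟩
  · linear_combination ((-1) + (1)*omega3) * homega
  · ring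
  · ring
  · ring
  · linear_combination ((-1) + (1)*omega3) * homega
  · ring
  · ring
  · ring
  · linear_combination ((-1) + (1)*omega3) * homega

lemma LI1sq : mI1 * mI1 = 1 := by
  simp only [Jmat, mJi, mI1, mI2, E1d3, mE1i, U1d3, mU1i, U2d3, mU2i, mW, mWi, hs3]
  simp only [Matrix.mul_fin_three, Matrix.one_fin_three]
  simp only [Matrix.vecCons, Fin.cons_inj, Equiv.apply_eq_iff_eq]
  refine ⟨⟨?_,?_,?_,trivial⟩,⟨?_,?_,?_,trivial⟩,⟨?_,?_,?_,trivial⟩,trivial⟩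
  · ring
  · ring
  · ring
  · ring
  · ring
  · ring
  · ring
  · ring
  · ring

lemma LI2sq : mI2 * mI2 = 1 := by
  simp only [Jmat, mJi, mI1, mI2, E1d3, mE1i, U1d3, mU1i, U2d3, mU2i, mW, mWi, hs3]
  simp only [Matrix.mul_fin_three, Matrix.one_fin_three]
  simp only [Matrix.vecCons, Fin.cons_inj, Equiv.apply_eq_iff_eq]
  refine ⟨⟨?_,?_,?_,trivial⟩,⟨?_,?_,?_,trivial⟩,⟨?_,?_,?_,trivial⟩,trivial⟩
  · ring
  · ring
  · ring
  · ring
  · ring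
  · ring
  · ring
  · ring
  · ring

lemma Lcomm : mI1 * mI2 = mI2 * mI1 := by
  simp only [Jmat, mJi, mI1, mI2, E1d3, mE1i, U1d3, mU1i, U2d3, mU2i, mW, mWi, hs3]
  simp only [Matrix.mul_fin_three, Matrix.one_fin_three]
  simp only [Matrix.vecCons, Fin.cons_inj, Equiv.apply_eq_iff_eq]
  refine ⟨⟨?_,?_,?_,trivial⟩,⟨?_,?_,?_,trivial⟩,⟨?_,?_,?_,trivial⟩,trivial⟩
  · ring
  · ring
  · ring
  · ring
  · ring
  · ring
  · ring
  · ring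
  · ring

lemma Lc1 : mI1 * E1d3 * mI1 = E1d3 := by
  simp only [Jmat, mJi, mI1, mI2, E1d3, mE1i, U1d3, mU1i, U2d3, mU2i, mW, mWi, hs3]
  simp only [Matrix.mul_fin_three, Matrix.one_fin_three]
  simp only [Matrix.vecCons, Fin.cons_inj, Equiv.apply_eq_iff_eq]
  refine ⟨⟨?_,?_,?_,trivial⟩,⟨?_,?_,?_,trivial⟩,⟨?_,?_,?_,trivial⟩,trivial⟩
  · ring
  · ring
  · ring
  · ring
  · ring
  · ring
  · ring
  · ring
  · ring

lemma Lc2 : mI1 * U1d3 * mI1 = U1d3 := by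
  simp only [Jmat, mJi, mI1, mI2, E1d3, mE1i, U1d3, mU1i, U2d3, mU2i, mW, mWi, hs3]
  simp only [Matrix.mul_fin_three, Matrix.one_fin_three]
  simp only [Matrix.vecCons, Fin.cons_inj, Equiv.apply_eq_iff_eq]
  refine ⟨⟨?_,?_,?_,trivial⟩,⟨?_,?_,?_,trivial⟩,⟨?_,?_,?_,trivial⟩,trivial⟩
  · ring
  · ring
  · ring
  · ring
  · ring
  · ring
  · ring
  · ring
  · ring

lemma Lc3 : mI1 * U2d3 * mI1 = mW * (E1d3 * mU2i * E1d3) := by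
  simp only [Jmat, mJi, mI1, mI2, E1d3, mE1i, U1d3, mU1i, U2d3, mU2i, mW, mWi, hs3]
  simp only [Matrix.mul_fin_three, Matrix.one_fin_three]
  simp only [Matrix.vecCons, Fin.cons_inj, Equiv.apply_eq_iff_eq]
  refine ⟨⟨?_,?_,?_,trivial⟩,⟨?_,?_,?_,trivial⟩,⟨?_,?_,?_,trivial⟩,trivial⟩
  · linear_combination ((-1) + (-4)*omega3 + (2)*omega3^2 + (1)*omega3^3) * homega
  · linear_combination ((-4) + (-6)*omega3 + (2)*omega3^2 + (1)*omega3^3) * homega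
  · linear_combination ((4) + (7)*omega3 + (1)*omega3^2 + (-1)*omega3^3) * homega
  · linear_combination ((2) + (1)*omega3 + (-7)*omega3^2 + (-1)*omega3^3 + (2)*omega3^4) * homega
  · linear_combination ((5) + (2)*omega3 + (-9)*omega3^2 + (-1)*omega3^3 + (2)*omega3^4) * homega
  · linear_combination ((-4) + (-6)*omega3 + (2)*omega3^2 + (1)*omega3^3) * homega
  · linear_combination ((1) + (-5)*omega3^2 + (-1)*omega3^3 + (2)*omega3^4) * homega
  · linear_combination ((2) + (1)*omega3 + (-7)*omega3^2 + (-1)*omega3^3 + (2)*omega3^4) * homega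
  · linear_combination ((-1) + (-4)*omega3 + (2)*omega3^2 + (1)*omega3^3) * homega

lemma Lc4 : mI2 * E1d3 * mI2 = E1d3 := by
  simp only [Jmat, mJi, mI1, mI2, E1d3, mE1i, U1d3, mU1i, U2d3, mU2i, mW, mWi, hs3]
  simp only [Matrix.mul_fin_three, Matrix.one_fin_three]
  simp only [Matrix.vecCons, Fin.cons_inj, Equiv.apply_eq_iff_eq]
  refine ⟨⟨?_,?_,?_,trivial⟩,⟨?_,?_,?_,trivial⟩,⟨?_,?_,?_,trivial⟩,trivial⟩
  · linear_combination ((-2)) * homega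
  · linear_combination ((-2)) * homega
  · ring
  · linear_combination ((4)) * homega
  · linear_combination ((4)) * homega
  · linear_combination ((-2)) * homega
  · linear_combination ((4)) * homega
  · linear_combination ((4)) * homega
  · linear_combination ((-2)) * homega

lemma Lc5 : mI2 * U1d3 * mI2 = mE1i * mU1i * mE1i := by
  simp only [Jmat, mJi, mI1, mI2, E1d3, mE1i, U1d3, mU1i, U2d3, mU2i, mW, mWi, hs3]
  simp only [Matrix.mul_fin_three, Matrix.one_fin_three]
  simp only [Matrix.vecCons, Fin.cons_inj, Equiv.apply_eq_iff_eq]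
  refine ⟨⟨?_,?_,?_,trivial⟩,⟨?_,?_,?_,trivial⟩,⟨?_,?_,?_,trivial⟩,trivial⟩
  · linear_combination ((-2)*omega3) * homega
  · linear_combination ((-2)*omega3) * homega
  · ring
  · linear_combination ((4) + (8)*omega3) * homega
  · linear_combination ((4) + (8)*omega3) * homega
  · linear_combination ((-2)*omega3) * homega
  · linear_combination ((4) + (8)*omega3) * homega
  · linear_combination ((4) + (8)*omega3) * homega
  · linear_combination ((-2)*omega3) * homega

lemma Lc6 : mI2 * U2d3 * mI2 = U2d3 := by
  simp only [Jmat, mJi, mI1, mI2, E1d3, mE1i, U1d3, mU1i, U2d3, mU2i, mW, mWi, hs3]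
  simp only [Matrix.mul_fin_three, Matrix.one_fin_three]
  simp only [Matrix.vecCons, Fin.cons_inj, Equiv.apply_eq_iff_eq]
  refine ⟨⟨?_,?_,?_,trivial⟩,⟨?_,?_,?_,trivial⟩,⟨?_,?_,?_,trivial⟩,trivial⟩
  · ring
  · ring
  · ring
  · ring
  · ring
  · ring
  · ring
  · ring
  · ring

lemma LI1 : I1d3 = mI1 := by
  rw [I1d3, Matrix.inv_eq_right_inv LJ]
  simp only [Jmat, mJi, mI1, mI2]
  simp only [Matrix.mul_fin_three]
  simp only [Matrix.vecCons, Fin.cons_inj, Equiv.apply_eq_iff_eq]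
  refine ⟨⟨?_,?_,?_,trivial⟩,⟨?_,?_,?_,trivial⟩,⟨?_,?_,?_,trivial⟩,trivial⟩
  · ring
  · ring
  · ring
  · ring
  · ring
  · ring
  · ring
  · ring
  · ring

lemma LI2 : I2d3 = mI2 := by
  rw [I2d3, Matrix.inv_eq_right_inv LJ]
  simp only [Jmat, mJi, mI1, mI2]
  simp only [Matrix.mul_fin_three]
  simp only [Matrix.vecCons, Fin.cons_inj, Equiv.apply_eq_iff_eq]
  refine ⟨⟨?_,?_,?_,trivial⟩,⟨?_,?_,?_,trivial⟩,⟨?_,?_,?_,trivial⟩,trivial⟩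
  · ring
  · ring
  · ring
  · ring
  · ring
  · ring
  · ring
  · ring
  · ring


/-! ### Units -/

def uE1 : GL3 := ⟨E1d3, mE1i, LE1, mul_eq_one_comm.mp LE1⟩
def uU1 : GL3 := ⟨U1d3, mU1i, LU1, mul_eq_one_comm.mp LU1⟩
def uU2 : GL3 := ⟨U2d3, mU2i, LU2, mul_eq_one_comm.mp LU2⟩
def uI1 : GL3 := ⟨mI1, mI1, LI1sq, LI1sq⟩
def uI2 : GL3 := ⟨mI2, mI2, LI2sq, LI2sq⟩
def uW : GL3 := ⟨mW, mWi, LW, mul_eq_one_comm.mp LW⟩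

lemma cls_unit {M : Matrix (Fin 3) (Fin 3) ℂ} (u : GL3)
    (h : (u : Matrix (Fin 3) (Fin 3) ℂ) = M) : cls M = pgl u := by
  have hM : IsUnit M := ⟨u, h⟩
  unfold cls
  rw [dif_pos hM]
  exact congrArg pgl (Units.ext (by rw [IsUnit.unit_spec, h]))

lemma mW_comm (A : Matrix (Fin 3) (Fin 3) ℂ) : A * mW = mW * A := by
  have h : mW = omega3 • (1 : Matrix (Fin 3) (Fin 3) ℂ) := by
    ext i j
    fin_cases i <;> fin_cases j <;>
      simp [mW, Matrix.smul_apply, Matrix.one_apply, Matrix.vecHead, Matrix.vecTail]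
  rw [h, mul_smul_comm, smul_mul_assoc, mul_one, one_mul]

lemma pglW : pgl uW = 1 := by
  have hc : uW ∈ Subgroup.center GL3 :=
    Subgroup.mem_center_iff.mpr fun g => Units.ext (mW_comm (g : Matrix (Fin 3) (Fin 3) ℂ))
  exact (QuotientGroup.eq_one_iff uW).mpr hc

/-! ### PGL level facts -/

lemma cls_E1 : cls E1d3 = pgl uE1 := cls_unit uE1 rfl
lemma cls_U1 : cls U1d3 = pgl uU1 := cls_unit uU1 rfl
lemma cls_U2 : cls U2d3 = pgl uU2 := cls_unit uU2 rfl
lemma cls_I1 : cls I1d3 = pgl uI1 := by rw [LI1]; exact cls_unit uI1 rfl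
lemma cls_I2 : cls I2d3 = pgl uI2 := by rw [LI2]; exact cls_unit uI2 rfl

lemma pgl_r1_sq : pgl uI1 * pgl uI1 = 1 := by
  rw [← _root_.map_mul, show uI1 * uI1 = 1 from Units.ext LI1sq, _root_.map_one]
lemma pgl_r2_sq : pgl uI2 * pgl uI2 = 1 := by
  rw [← _root_.map_mul, show uI2 * uI2 = 1 from Units.ext LI2sq, _root_.map_one]
lemma pgl_r_comm : pgl uI1 * pgl uI2 = pgl uI2 * pgl uI1 := by
  rw [← _root_.map_mul, ← _root_.map_mul, show uI1 * uI2 = uI2 * uI1 from Units.ext Lcomm]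

lemma pgl_f1 : pgl uI1 * pgl uE1 * pgl uI1 = pgl uE1 := by
  rw [← _root_.map_mul, ← _root_.map_mul, show uI1 * uE1 * uI1 = uE1 from Units.ext Lc1]
lemma pgl_f2 : pgl uI1 * pgl uU1 * pgl uI1 = pgl uU1 := by
  rw [← _root_.map_mul, ← _root_.map_mul, show uI1 * uU1 * uI1 = uU1 from Units.ext Lc2]
lemma pgl_f3 : pgl uI1 * pgl uU2 * pgl uI1 = pgl uE1 * (pgl uU2)⁻¹ * pgl uE1 := by
  have h : uI1 * uU2 * uI1 = uW * (uE1 * uU2⁻¹ * uE1) := Units.ext Lc3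
  rw [← _root_.map_mul, ← _root_.map_mul, h, _root_.map_mul, pglW, one_mul]
  simp [_root_.map_mul, _root_.map_inv]
lemma pgl_f4 : pgl uI2 * pgl uE1 * pgl uI2 = pgl uE1 := by
  rw [← _root_.map_mul, ← _root_.map_mul, show uI2 * uE1 * uI2 = uE1 from Units.ext Lc4]
lemma pgl_f5 : pgl uI2 * pgl uU1 * pgl uI2 = (pgl uE1)⁻¹ * (pgl uU1)⁻¹ * (pgl uE1)⁻¹ := by
  have h : uI2 * uU1 * uI2 = uE1⁻¹ * uU1⁻¹ * uE1⁻¹ := Units.ext Lc5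
  rw [← _root_.map_mul, ← _root_.map_mul, h]
  simp [_root_.map_mul, _root_.map_inv]

lemma pgl_f6 : pgl uI2 * pgl uU2 * pgl uI2 = pgl uU2 := by
  rw [← _root_.map_mul, ← _root_.map_mul, show uI2 * uU2 * uI2 = uU2 from Units.ext Lc6]

/-! ### Group theory -/

lemma conj_closure {G : Type*} [Group G] {S : Set G} {r : G} (hrr : r * r = 1)
    (h : ∀ g ∈ S, r * g * r⁻¹ ∈ Subgroup.closure S) :
    ∀ x ∈ Subgroup.closure S, r * x * r⁻¹ ∈ Subgroup.closure S := by
  intro x hx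
  induction hx using Subgroup.closure_induction with
  | mem g hg => exact h g hg
  | one => simpa using one_mem _
  | mul a b _ _ ha hb =>
      have : r * (a * b) * r⁻¹ = (r * a * r⁻¹) * (r * b * r⁻¹) := by group
      rw [this]; exact mul_mem ha hb
  | inv a _ ha =>
      have : r * a⁻¹ * r⁻¹ = (r * a * r⁻¹)⁻¹ := by group
      rw [this]; exact inv_mem ha

lemma mem_normalizer_of {G : Type*} [Group G] {S : Set G} {r : G} (hrr : r * r = 1)
    (h : ∀ g ∈ S, r * g * r⁻¹ ∈ Subgroup.closure S) :
    r ∈ Subgroup.normalizer (Subgroup.closure S : Set G) := by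
  have hrinv : r⁻¹ = r := inv_eq_of_mul_eq_one_right hrr
  refine Subgroup.mem_normalizer_iff.mpr fun x => ⟨fun hx => conj_closure hrr h x hx, fun hx => ?_⟩
  have h2 := conj_closure hrr h _ hx
  have : r * (r * x * r⁻¹) * r⁻¹ = x := by
    rw [hrinv]
    calc r * (r * x * r) * r = (r * r) * x * (r * r) := by group
    _ = x := by rw [hrr]; group
  rwa [this] at h2

def involHom {G : Type*} [Group G] (z : G) (hz : z * z = 1) :
    Multiplicative (ZMod 2) →* G :=
  MonoidHom.mk' (fun a => z ^ (Multiplicative.toAdd a).val) (by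
    intro a b
    show z ^ ((Multiplicative.toAdd a + Multiplicative.toAdd b).val) = _
    have key : ∀ m : ℕ, z ^ (m % 2) = z ^ m := by
      intro m
      conv_rhs => rw [← Nat.div_add_mod m 2]
      rw [pow_add, pow_mul, show z ^ 2 = 1 by rw [pow_two]; exact hz, one_pow, one_mul]
    rw [ZMod.val_add, key, pow_add])

lemma involHom_ofAdd_one {G : Type*} [Group G] (z : G) (hz : z * z = 1) :
    involHom z hz (Multiplicative.ofAdd 1) = z := by
  show z ^ ((1 : ZMod 2).val) = z
  rw [ZMod.val_one, pow_one]

lemma involHom_one {G : Type*} [Group G] (z : G) (hz : z * z = 1) :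
    involHom z hz 1 = z ^ ((0 : ZMod 2).val) := rfl

lemma card_dvd_four_of {G : Type*} [Group G] {x y : G} (hx : x * x = 1) (hy : y * y = 1)
    (hxy : x * y = y * x) (hgen : Subgroup.closure {x, y} = ⊤) : Nat.card G ∣ 4 := by
  have hcomm : ∀ a b, Commute (involHom x hx a) (involHom y hy b) := by
    intro a b
    exact (Commute.pow_pow (hxy : Commute x y) _ _)
  set φ := (involHom x hx).noncommCoprod (involHom y hy) hcomm with hφ
  have hxr : x ∈ φ.range := by
    refine ⟨(Multiplicative.ofAdd 1, 1), ?_⟩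
    show involHom x hx (Multiplicative.ofAdd 1) * involHom y hy 1 = x
    rw [involHom_ofAdd_one, _root_.map_one, mul_one]
  have hyr : y ∈ φ.range := by
    refine ⟨(1, Multiplicative.ofAdd 1), ?_⟩
    show involHom x hx 1 * involHom y hy (Multiplicative.ofAdd 1) = y
    rw [involHom_ofAdd_one, _root_.map_one, one_mul]
  have hsurj : Function.Surjective φ := by
    rw [← MonoidHom.range_eq_top]
    refine top_unique ?_
    rw [← hgen]
    exact (Subgroup.closure_le _).mpr (by
      intro g hg
      rcases hg with h | h
      · subst h; exact hxr
      · rw [Set.mem_singleton_iff] at h; subst h; exact hyr)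
  have hcard : Nat.card G = φ.ker.index := by
    rw [Subgroup.index]
    exact (Nat.card_congr (QuotientGroup.quotientKerEquivOfSurjective φ hsurj).toEquiv).symm
  have hdvd : φ.ker.index ∣
      Nat.card (Multiplicative (ZMod 2) × Multiplicative (ZMod 2)) :=
    Subgroup.index_dvd_card _
  have h4 : Nat.card (Multiplicative (ZMod 2) × Multiplicative (ZMod 2)) = 4 := by
    simp [Nat.card_eq_fintype_card]
  rw [hcard]
  rw [h4] at hdvd
  exact hdvd

end stmt1aux

/-- H̃(3) is contained in H(3), is normal in H(3), and its index in H(3)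
divides 4. -/
theorem stmt1 : Ht3 ≤ H3 ∧ (Ht3.subgroupOf H3).Normal ∧ Ht3.relIndex H3 ∣ 4 := by
  have hsub : ({cls E1d3, cls U1d3, cls U2d3} : Set PGL3) ⊆
      ({cls E1d3, cls U1d3, cls U2d3, cls I1d3, cls I2d3} : Set PGL3) := by
    intro z hz
    simp only [Set.mem_insert_iff, Set.mem_singleton_iff] at hz ⊢
    tauto
  have hle : Ht3 ≤ H3 := Subgroup.closure_mono hsub
  -- memberships
  have hq1 : pgl uE1 ∈ Ht3 := by
    rw [← cls_E1]; exact Subgroup.subset_closure (Set.mem_insert _ _)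
  have hq2 : pgl uU1 ∈ Ht3 := by
    rw [← cls_U1]
    exact Subgroup.subset_closure (Set.mem_insert_iff.mpr (Or.inr (Set.mem_insert _ _)))
  have hq3 : pgl uU2 ∈ Ht3 := by
    rw [← cls_U2]
    exact Subgroup.subset_closure (Set.mem_insert_iff.mpr (Or.inr (Or.inr rfl)))
  have hr1inv : (pgl uI1)⁻¹ = pgl uI1 := inv_eq_of_mul_eq_one_right pgl_r1_sq
  have hr2inv : (pgl uI2)⁻¹ = pgl uI2 := inv_eq_of_mul_eq_one_right pgl_r2_sq
  have hc1 : ∀ g ∈ ({cls E1d3, cls U1d3, cls U2d3} : Set PGL3),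
      pgl uI1 * g * (pgl uI1)⁻¹ ∈ Ht3 := by
    intro g hg
    rw [hr1inv]
    rcases hg with h | h | h
    · subst h; rw [cls_E1, pgl_f1]; exact hq1
    · subst h; rw [cls_U1, pgl_f2]; exact hq2
    · rw [Set.mem_singleton_iff] at h; subst h
      rw [cls_U2, pgl_f3]
      exact mul_mem (mul_mem hq1 (inv_mem hq3)) hq1
  have hc2 : ∀ g ∈ ({cls E1d3, cls U1d3, cls U2d3} : Set PGL3),
      pgl uI2 * g * (pgl uI2)⁻¹ ∈ Ht3 := by
    intro g hg
    rw [hr2inv]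
    rcases hg with h | h | h
    · subst h; rw [cls_E1, pgl_f4]; exact hq1
    · subst h; rw [cls_U1, pgl_f5]
      exact mul_mem (mul_mem (inv_mem hq1) (inv_mem hq2)) (inv_mem hq1)
    · rw [Set.mem_singleton_iff] at h; subst h
      rw [cls_U2, pgl_f6]; exact hq3
  have hnorm : H3 ≤ Subgroup.normalizer (Ht3 : Set PGL3) := by
    refine (Subgroup.closure_le _).mpr ?_
    intro g hg
    rcases hg with h | h | h | h | h
    · subst h; exact Subgroup.le_normalizer (by rw [← cls_E1] at hq1; exact hq1)
    · subst h; exact Subgroup.le_normalizer (by rw [← cls_U1] at hq2; exact hq2)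
    · subst h; exact Subgroup.le_normalizer (by rw [← cls_U2] at hq3; exact hq3)
    · subst h; rw [cls_I1]; exact mem_normalizer_of pgl_r1_sq hc1
    · rw [Set.mem_singleton_iff] at h; subst h
      rw [cls_I2]; exact mem_normalizer_of pgl_r2_sq hc2
  have hNormal : (Ht3.subgroupOf H3).Normal := by
    constructor
    intro n hn g
    rw [Subgroup.mem_subgroupOf] at hn ⊢
    have hgnorm := Subgroup.mem_normalizer_iff.mp (hnorm g.2)
    exact (hgnorm (n : PGL3)).mp hn
  refine ⟨hle, hNormal, ?_⟩
  -- index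
  haveI : (Ht3.subgroupOf H3).Normal := hNormal
  set N := Ht3.subgroupOf H3 with hN
  have hi1mem : cls I1d3 ∈ H3 := Subgroup.subset_closure
    (Set.mem_insert_iff.mpr (Or.inr (Or.inr (Or.inr (Set.mem_insert _ _)))))
  have hi2mem : cls I2d3 ∈ H3 := Subgroup.subset_closure
    (Set.mem_insert_iff.mpr (Or.inr (Or.inr (Or.inr (Or.inr rfl)))))
  let i1 : H3 := ⟨pgl uI1, by rw [← cls_I1]; exact hi1mem⟩
  let i2 : H3 := ⟨pgl uI2, by rw [← cls_I2]; exact hi2mem⟩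
  let x : H3 ⧸ N := QuotientGroup.mk' N i1
  let y : H3 ⧸ N := QuotientGroup.mk' N i2
  have hxx : x * x = 1 := by
    show QuotientGroup.mk' N i1 * QuotientGroup.mk' N i1 = 1
    rw [← _root_.map_mul, show i1 * i1 = 1 from Subtype.ext pgl_r1_sq, _root_.map_one]
  have hyy : y * y = 1 := by
    show QuotientGroup.mk' N i2 * QuotientGroup.mk' N i2 = 1
    rw [← _root_.map_mul, show i2 * i2 = 1 from Subtype.ext pgl_r2_sq, _root_.map_one]
  have hxy : x * y = y * x := by
    show QuotientGroup.mk' N i1 * QuotientGroup.mk' N i2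
        = QuotientGroup.mk' N i2 * QuotientGroup.mk' N i1
    rw [← _root_.map_mul, ← _root_.map_mul, show i1 * i2 = i2 * i1 from Subtype.ext pgl_r_comm]
  have h0 : Subgroup.closure (H3.subtype ⁻¹'
      ({cls E1d3, cls U1d3, cls U2d3, cls I1d3, cls I2d3} : Set PGL3)) = ⊤ :=
    Subgroup.closure_preimage_eq_top _
  have h1 : Subgroup.closure ((QuotientGroup.mk' N) '' (H3.subtype ⁻¹'
      ({cls E1d3, cls U1d3, cls U2d3, cls I1d3, cls I2d3} : Set PGL3))) = ⊤ := by
    rw [← MonoidHom.map_closure, h0]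
    exact Subgroup.map_top_of_surjective _ (QuotientGroup.mk'_surjective N)
  have hmk1 : ∀ h : H3, (h : PGL3) ∈ Ht3 → QuotientGroup.mk' N h = 1 := by
    intro h hh
    exact (QuotientGroup.eq_one_iff h).mpr (Subgroup.mem_subgroupOf.mpr hh)
  have hgen : Subgroup.closure ({x, y} : Set (H3 ⧸ N)) = ⊤ := by
    refine le_antisymm le_top ?_
    rw [← h1]
    refine (Subgroup.closure_le _).mpr ?_
    rintro q ⟨h, hh, rfl⟩
    rcases hh with e | e | e | e | e
    · rw [hmk1 h (by rw [show (h : PGL3) = cls E1d3 from e, cls_E1]; exact hq1)]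
      exact one_mem _
    · rw [hmk1 h (by rw [show (h : PGL3) = cls U1d3 from e, cls_U1]; exact hq2)]
      exact one_mem _
    · rw [hmk1 h (by rw [show (h : PGL3) = cls U2d3 from e, cls_U2]; exact hq3)]
      exact one_mem _
    · have : h = i1 := Subtype.ext ((show (h : PGL3) = cls I1d3 from e).trans cls_I1)
      rw [this]
      exact Subgroup.subset_closure (Set.mem_insert _ _)
    · rw [Set.mem_singleton_iff] at e
      have : h = i2 := Subtype.ext ((show (h : PGL3) = cls I2d3 from e).trans cls_I2)
      rw [this]
      exact Subgroup.subset_closure (Set.mem_insert_iff.mpr (Or.inr rfl))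
  exact card_dvd_four_of hxx hyy hxy hgen

end
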